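/- Let G be a connected VT⁺ graph on a finite set Y, let Z be a finite set with |Y| ≤ |Z|, let ε > 0, and let H be a channel matrix from Y to Z satisfying ε-differential privacy with respect to G. Fix any vertex y₀ ∈ Y and, for each d from 0 to the diameter of G, let n_d be the number of vertices of G at graph distance d from y₀. Then, under the uniform prior p(y) = 1/|Y|, every guess function g : Z → Y satisfies U(g) ≤ 1 / Σ_d n_d · e^{−ε·d}. -/

import Mathlib

open Finset

/-- The diameter of a graph on a finite vertex set. -/
noncomputable def graphDiam {Y : Type*} [Fintype Y] (G : SimpleGraph Y) : ℕ :=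
  Finset.univ.sup fun p : Y × Y => G.dist p.1 p.2

/-- The number of vertices at graph distance `d` from `r`. -/
noncomputable def nAtDist {Y : Type*} [Fintype Y] (G : SimpleGraph Y) (r : Y) (d : ℕ) : ℕ :=
  (Finset.univ.filter fun a => G.dist r a = d).card

/-- `∑ d from 0 to diam, n_d · e^{-ε d}`. -/
noncomputable def expDistSum {Y : Type*} [Fintype Y] (G : SimpleGraph Y) (ε : ℝ) (r : Y) : ℝ :=
  ∑ d ∈ Finset.range (graphDiam G + 1), (nAtDist G r d : ℝ) * Real.exp (-(ε * d))

/-- `ε`-differential privacy of a channel matrix with respect to a graph. -/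
def SatisfiesDP {Y Z : Type*} (G : SimpleGraph Y) (ε : ℝ) (H : Y → Z → ℝ) : Prop :=
  ∀ (z : Z) (y y' : Y), G.Adj y y' → H y z ≤ Real.exp ε * H y' z

/-- VT⁺ graphs. -/
def IsVTPlus {Y : Type*} [Fintype Y] (G : SimpleGraph Y) : Prop :=
  ∃ σ : Fin (Fintype.card Y) → (G ≃g G), ∀ y y' : Y, ∃ i, σ i y = y'

private lemma iso_dist_le {Y : Type*} {G : SimpleGraph Y} (hconn : G.Connected)
    (φ : G ≃g G) (u v : Y) : G.dist (φ u) (φ v) ≤ G.dist u v := by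
  obtain ⟨p, hp⟩ := hconn.exists_walk_length_eq_dist u v
  calc G.dist (φ u) (φ v) ≤ (p.map φ.toHom).length := SimpleGraph.dist_le _
    _ = G.dist u v := by rw [SimpleGraph.Walk.length_map, hp]

private lemma iso_dist {Y : Type*} {G : SimpleGraph Y} (hconn : G.Connected)
    (φ : G ≃g G) (u v : Y) : G.dist (φ u) (φ v) = G.dist u v := by
  refine le_antisymm (iso_dist_le hconn φ u v) ?_
  have := iso_dist_le hconn φ.symm (φ u) (φ v)
  simpa using this

private lemma walk_bound {Y Z : Type*} {G : SimpleGraph Y} {ε : ℝ} {H : Y → Z → ℝ}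
    (hε : 0 < ε) (hH0 : ∀ y z, 0 ≤ H y z) (hdp : SatisfiesDP G ε H) (z : Z) :
    ∀ {u v : Y} (p : G.Walk u v), H u z ≤ Real.exp (ε * p.length) * H v z := by
  intro u v p
  induction p with
  | nil => simp
  | @cons a b c hab q ih =>
    calc H a z ≤ Real.exp ε * H b z := hdp z a b hab
      _ ≤ Real.exp ε * (Real.exp (ε * q.length) * H c z) := by
          exact mul_le_mul_of_nonneg_left ih (Real.exp_pos _).le
      _ = Real.exp (ε * (q.cons hab).length) * H c z := by
          rw [← mul_assoc, ← Real.exp_add, SimpleGraph.Walk.length_cons]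
          push_cast; ring_nf

theorem stmt3 {Y Z : Type*} [Fintype Y] [Nonempty Y] [Fintype Z]
    (G : SimpleGraph Y)
    (hconn : G.Connected) (hVT : IsVTPlus G)
    (hcard : Fintype.card Y ≤ Fintype.card Z)
    (ε : ℝ) (hε : 0 < ε)
    (H : Y → Z → ℝ)
    (hH0 : ∀ y z, 0 ≤ H y z)
    (hH1 : ∀ y, ∑ z, H y z = 1)
    (hdp : SatisfiesDP G ε H)
    (y₀ : Y)
    (g : Z → Y) :
    ∑ z, (1 / (Fintype.card Y : ℝ)) * H (g z) z ≤ 1 / expDistSum G ε y₀ := by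
  classical
  set n : ℝ := (Fintype.card Y : ℝ)
  have hn : 0 < n := by positivity
  set S : ℝ := expDistSum G ε y₀ with hS
  -- distance-based DP bound
  have hdist : ∀ (z : Z) (u v : Y),
      Real.exp (-(ε * G.dist u v)) * H u z ≤ H v z := by
    intro z u v
    obtain ⟨p, hp⟩ := hconn.exists_walk_length_eq_dist u v
    have := walk_bound hε hH0 hdp z p
    rw [hp] at this
    calc Real.exp (-(ε * G.dist u v)) * H u z
        ≤ Real.exp (-(ε * G.dist u v)) * (Real.exp (ε * G.dist u v) * H v z) :=
          mul_le_mul_of_nonneg_left this (Real.exp_pos _).le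
      _ = H v z := by rw [← mul_assoc, ← Real.exp_add]; simp
  -- sphere sizes are base-point independent
  have hsphere : ∀ (r : Y) (d : ℕ), nAtDist G r d = nAtDist G y₀ d := by
    intro r d
    obtain ⟨σ, hσ⟩ := hVT
    obtain ⟨i, hi⟩ := hσ y₀ r
    set φ := σ i
    unfold nAtDist
    apply Finset.card_nbij' (fun a => φ.symm a) (fun a => φ a)
    · intro a ha
      simp only [Finset.mem_coe, Finset.mem_filter, Finset.mem_univ, true_and] at ha ⊢
      rw [← ha, ← hi]
      have := iso_dist hconn φ y₀ (φ.symm a)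
      simp only [RelIso.apply_symm_apply] at this
      exact this.symm
    · intro a ha
      simp only [Finset.mem_coe, Finset.mem_filter, Finset.mem_univ, true_and] at ha ⊢
      rw [← ha, ← hi, iso_dist hconn φ]
    · intro a _; simp
    · intro a _; simp
  -- sum over vertices of exp(-ε d(r,·)) equals S
  have hsum : ∀ r : Y, ∑ y : Y, Real.exp (-(ε * G.dist r y)) = S := by
    intro r
    rw [hS]
    unfold expDistSum
    rw [← Finset.sum_fiberwise_of_maps_to (g := fun y => G.dist r y)
      (t := Finset.range (graphDiam G + 1)) (fun y _ => by
        simp only [Finset.mem_range, Nat.lt_succ_iff]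
        exact Finset.le_sup (f := fun p : Y × Y => G.dist p.1 p.2)
          (Finset.mem_univ (r, y)))]
    refine Finset.sum_congr rfl fun d _ => ?_
    rw [Finset.sum_congr rfl (fun y hy => by
      simp only [Finset.mem_filter] at hy
      rw [hy.2]), Finset.sum_const, nsmul_eq_mul, ← hsphere r d]
    rfl
  -- S > 0
  have hSpos : 0 < S := by
    rw [hS]
    unfold expDistSum
    have h0 : (0:ℝ) < (nAtDist G y₀ 0 : ℝ) * Real.exp (-(ε * (0:ℕ))) := by
      have : 0 < nAtDist G y₀ 0 := by
        apply Finset.card_pos.mpr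
        exact ⟨y₀, by simp [SimpleGraph.dist_self]⟩
      positivity
    refine Finset.sum_pos' (fun d _ => by positivity) ⟨0, Finset.mem_range.mpr (Nat.succ_pos _), h0⟩
  -- main inequality: (∑ z, H (g z) z) * S ≤ n
  have key : (∑ z, H (g z) z) * S ≤ n := by
    calc (∑ z, H (g z) z) * S = ∑ z, H (g z) z * S := by rw [Finset.sum_mul]
      _ = ∑ z, ∑ y : Y, Real.exp (-(ε * G.dist (g z) y)) * H (g z) z := by
          refine Finset.sum_congr rfl fun z _ => ?_
          rw [← hsum (g z), Finset.mul_sum]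
          exact Finset.sum_congr rfl fun y _ => mul_comm _ _
      _ ≤ ∑ z, ∑ y : Y, H y z :=
          Finset.sum_le_sum fun z _ => Finset.sum_le_sum fun y _ => hdist z (g z) y
      _ = ∑ y : Y, ∑ z, H y z := Finset.sum_comm
      _ = n := by simp [hH1, n]
  have hT : ∑ z, H (g z) z ≤ n / S := (le_div_iff₀ hSpos).mpr key
  calc ∑ z, (1 / n) * H (g z) z = (1 / n) * ∑ z, H (g z) z := by rw [Finset.mul_sum]
    _ ≤ (1 / n) * (n / S) := by
        exact mul_le_mul_of_nonneg_left hT (by positivity)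
    _ = 1 / S := by field_simp
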